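/- arXiv:1509.02648 — 2 statements merged into one kernel-verified Lean document; each statement's English description precedes it below -/
import Mathlib

section
/- Let A ∈ ℝ^{n×n}, B ∈ ℝ^{n×m}, C ∈ ℝ^{p×n}, E ∈ ℝ^{m'×n}, Θ ∈ ℝ^{n×n}, g > 0, and X a positive definite symmetric n×n real matrix. If there exists ε > 0 such that AᵀX + XA + g⁻²XBBᵀX + 4ε XΘEᵀEΘᵀX + (1/ε)EᵀE + CᵀC < 0 (negative definite), then for every symmetric m'×m' real matrix Δ with Δ² ≤ I, (A + 2ΘEᵀΔE)ᵀX + X(A + 2ΘEᵀΔE) + CᵀC + g⁻²XBBᵀX < 0. -/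
open Matrix

lemma psd_smul_nonneg {k : ℕ} {M : Matrix (Fin k) (Fin k) ℝ} (hM : M.PosSemidef)
    {c : ℝ} (hc : 0 ≤ c) : (c • M).PosSemidef := by
  constructor
  · show (c • M)ᴴ = c • M
    rw [Matrix.conjTranspose_smul, hM.1]
    simp
  · intro x
    exact (hM.smul hc).2 x

theorem xie_de_souza_scaling_lemma
    {n m p m' : ℕ}
    (A : Matrix (Fin n) (Fin n) ℝ) (B : Matrix (Fin n) (Fin m) ℝ)
    (C : Matrix (Fin p) (Fin n) ℝ) (E : Matrix (Fin m') (Fin n) ℝ)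
    (Θ : Matrix (Fin n) (Fin n) ℝ) (g : ℝ) (hg : 0 < g)
    (X : Matrix (Fin n) (Fin n) ℝ) (hXsym : X.IsSymm) (hX : X.PosDef)
    (h : ∃ ε : ℝ, 0 < ε ∧
      (-(Aᵀ * X + X * A + (g ^ 2)⁻¹ • (X * B * Bᵀ * X)
        + (4 * ε) • (X * Θ * Eᵀ * E * Θᵀ * X)
        + ε⁻¹ • (Eᵀ * E) + Cᵀ * C)).PosDef) :
    ∀ Δ : Matrix (Fin m') (Fin m') ℝ, Δ.IsSymm → ((1 : Matrix (Fin m') (Fin m') ℝ) - Δ * Δ).PosSemidef →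
      (-((A + (2 : ℝ) • (Θ * Eᵀ * Δ * E))ᵀ * X + X * (A + (2 : ℝ) • (Θ * Eᵀ * Δ * E))
        + Cᵀ * C + (g ^ 2)⁻¹ • (X * B * Bᵀ * X))).PosDef := by
  obtain ⟨ε, hε, hH⟩ := h
  intro Δ hΔ hΔΔ
  have hXt : Xᵀ = X := hXsym
  have hΔt : Δᵀ = Δ := hΔ
  set R : Matrix (Fin m') (Fin n) ℝ := E * Θᵀ * X with hR
  set T : Matrix (Fin m') (Fin n) ℝ := (2 * ε) • (Δ * R) - E with hT
  have key : (-((A + (2 : ℝ) • (Θ * Eᵀ * Δ * E))ᵀ * X + X * ((A + (2 : ℝ) • (Θ * Eᵀ * Δ * E)))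
        + Cᵀ * C + (g ^ 2)⁻¹ • (X * B * Bᵀ * X)))
      = (-(Aᵀ * X + X * A + (g ^ 2)⁻¹ • (X * B * Bᵀ * X)
        + (4 * ε) • (X * Θ * Eᵀ * E * Θᵀ * X)
        + ε⁻¹ • (Eᵀ * E) + Cᵀ * C))
        + (4 * ε) • (Rᵀ * ((1 - Δ * Δ) * R))
        + ε⁻¹ • (Tᵀ * T) := by
    simp only [hT, hR, transpose_add, transpose_smul, transpose_mul, transpose_sub,
      transpose_transpose, transpose_one, hXt, hΔt, Matrix.mul_sub, Matrix.sub_mul,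
      Matrix.mul_add, Matrix.add_mul, Matrix.smul_mul, Matrix.mul_smul, Matrix.one_mul,
      Matrix.mul_one]
    simp only [Matrix.mul_assoc]
    match_scalars <;> field_simp <;> ring
  rw [key]
  have h1 : ((4 * ε) • (Rᵀ * ((1 - Δ * Δ) * R))).PosSemidef := by
    refine psd_smul_nonneg ?_ (by positivity)
    have := hΔΔ.conjTranspose_mul_mul_same R
    simpa [Matrix.mul_assoc] using this
  have h2 : (ε⁻¹ • (Tᵀ * T)).PosSemidef := by
    refine psd_smul_nonneg ?_ (by positivity)
    simpa using Matrix.posSemidef_conjTranspose_mul_self T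
  exact (hH.add_posSemidef h1).add_posSemidef h2
end

section
/- Suppose X > 0 solves (A + 2ΘEᵀΔE)ᵀX + X(A + 2ΘEᵀΔE) + CᵀC + g⁻²XBBᵀX < 0 for all symmetric Δ with Δ² ≤ I. Then for each such Δ, the transfer function bound holds at zero frequency: ‖C(−(A+2ΘEᵀΔE))⁻¹B‖ < g, where ‖·‖ is the operator (spectral) norm, and A+2ΘEᵀΔE is invertible (being Hurwitz). -/
open Matrix
open scoped Matrix.Norms.L2Operator

private lemma dp_self_nonneg {k : ℕ} (v : Fin k → ℝ) : 0 ≤ v ⬝ᵥ v :=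
  Finset.sum_nonneg fun _ _ => mul_self_nonneg _

private lemma dp_self_pos {k : ℕ} {v : Fin k → ℝ} (hv : v ≠ 0) : 0 < v ⬝ᵥ v := by
  rcases Function.ne_iff.mp hv with ⟨i, hi⟩
  exact Finset.sum_pos' (fun j _ => mul_self_nonneg _)
    ⟨i, Finset.mem_univ i, mul_self_pos.mpr (by simpa using hi)⟩

private lemma dp_transpose {a b : ℕ} (M : Matrix (Fin a) (Fin b) ℝ) (v : Fin a → ℝ)
    (w : Fin b → ℝ) : v ⬝ᵥ M.mulVec w = Mᵀ.mulVec v ⬝ᵥ w := by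
  rw [Matrix.dotProduct_mulVec, Matrix.mulVec_transpose]

private lemma quad_expand {n m p : ℕ} (A' X : Matrix (Fin n) (Fin n) ℝ)
    (B : Matrix (Fin n) (Fin m) ℝ) (C : Matrix (Fin p) (Fin n) ℝ) (g : ℝ)
    (hXs : Xᵀ = X) (x : Fin n → ℝ) :
    x ⬝ᵥ (A'ᵀ * X + X * A' + Cᵀ * C + (g ^ 2)⁻¹ • (X * B * Bᵀ * X)).mulVec x
      = A'.mulVec x ⬝ᵥ X.mulVec x + X.mulVec x ⬝ᵥ A'.mulVec x
        + C.mulVec x ⬝ᵥ C.mulVec x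
        + (g ^ 2)⁻¹ * (Bᵀ.mulVec (X.mulVec x) ⬝ᵥ Bᵀ.mulVec (X.mulVec x)) := by
  have h1 : x ⬝ᵥ (A'ᵀ * X).mulVec x = A'.mulVec x ⬝ᵥ X.mulVec x := by
    rw [← Matrix.mulVec_mulVec, dp_transpose, Matrix.transpose_transpose]
  have h2 : x ⬝ᵥ (X * A').mulVec x = X.mulVec x ⬝ᵥ A'.mulVec x := by
    rw [← Matrix.mulVec_mulVec, dp_transpose, hXs]
  have h3 : x ⬝ᵥ (Cᵀ * C).mulVec x = C.mulVec x ⬝ᵥ C.mulVec x := by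
    rw [← Matrix.mulVec_mulVec, dp_transpose, Matrix.transpose_transpose]
  have h4 : x ⬝ᵥ (X * B * Bᵀ * X).mulVec x
      = Bᵀ.mulVec (X.mulVec x) ⬝ᵥ Bᵀ.mulVec (X.mulVec x) := by
    rw [← Matrix.mulVec_mulVec, ← Matrix.mulVec_mulVec, ← Matrix.mulVec_mulVec,
      dp_transpose, hXs, dp_transpose]
  rw [Matrix.add_mulVec, Matrix.add_mulVec, Matrix.add_mulVec, dotProduct_add,
    dotProduct_add, dotProduct_add, Matrix.smul_mulVec,
    dotProduct_smul, h1, h2, h3, h4, smul_eq_mul]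

private lemma norm_sq_eq_dp {k : ℕ} (v : EuclideanSpace ℝ (Fin k)) :
    ‖v‖^2 = WithLp.equiv 2 (Fin k → ℝ) v ⬝ᵥ WithLp.equiv 2 (Fin k → ℝ) v := by
  rw [← real_inner_self_eq_norm_sq]
  simp only [PiLp.inner_apply, dotProduct, RCLike.inner_apply, conj_trivial, WithLp.equiv_apply]

private lemma norm_app_sq_eq_dp {k l : ℕ} (M : Matrix (Fin k) (Fin l) ℝ)
    (v : EuclideanSpace ℝ (Fin l)) :
    ‖(Matrix.toEuclideanLin.trans LinearMap.toContinuousLinearMap) M v‖ ^ 2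
      = M.mulVec (WithLp.equiv 2 (Fin l → ℝ) v) ⬝ᵥ M.mulVec (WithLp.equiv 2 (Fin l → ℝ) v) := by
  rw [LinearEquiv.trans_apply]
  simp only [LinearMap.coe_toContinuousLinearMap', Matrix.toEuclideanLin_apply]
  rw [norm_sq_eq_dp]
  simp

theorem robust_sbr_implies_dc_gain_bound
    {n m p q : ℕ}
    (A Θ X : Matrix (Fin n) (Fin n) ℝ) (E : Matrix (Fin q) (Fin n) ℝ)
    (B : Matrix (Fin n) (Fin m) ℝ) (C : Matrix (Fin p) (Fin n) ℝ)
    (g : ℝ) (hg : 0 < g) (hXsym : X.IsSymm) (hX : X.PosDef)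
    (h : ∀ Δ : Matrix (Fin q) (Fin q) ℝ, Δ.IsSymm →
      ((1 : Matrix (Fin q) (Fin q) ℝ) - Δ * Δ).PosSemidef →
      (-((A + (2 : ℝ) • (Θ * Eᵀ * Δ * E))ᵀ * X + X * (A + (2 : ℝ) • (Θ * Eᵀ * Δ * E))
        + Cᵀ * C + (g ^ 2)⁻¹ • (X * B * Bᵀ * X))).PosDef) :
    ∀ Δ : Matrix (Fin q) (Fin q) ℝ, Δ.IsSymm →
      ((1 : Matrix (Fin q) (Fin q) ℝ) - Δ * Δ).PosSemidef →
      IsUnit (A + (2 : ℝ) • (Θ * Eᵀ * Δ * E)) ∧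
      ‖C * (-(A + (2 : ℝ) • (Θ * Eᵀ * Δ * E)))⁻¹ * B‖ < g := by
  intro Δ hΔs hΔ
  set A' : Matrix (Fin n) (Fin n) ℝ := A + (2 : ℝ) • (Θ * Eᵀ * Δ * E) with hA'def
  have hpd := h Δ hΔs hΔ
  have hXs : Xᵀ = X := hXsym
  -- the strict quadratic-form inequality
  have key : ∀ x : Fin n → ℝ, x ≠ 0 →
      A'.mulVec x ⬝ᵥ X.mulVec x + X.mulVec x ⬝ᵥ A'.mulVec x
        + C.mulVec x ⬝ᵥ C.mulVec x
        + (g ^ 2)⁻¹ * (Bᵀ.mulVec (X.mulVec x) ⬝ᵥ Bᵀ.mulVec (X.mulVec x)) < 0 := by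
    intro x hx
    have h1 := hpd.dotProduct_mulVec_pos hx
    rw [Matrix.neg_mulVec, dotProduct_neg] at h1
    have h2 := quad_expand A' X B C g hXs x
    simp only [star_trivial, RCLike.re_to_real] at h1
    linarith [h2 ▸ h1]
  -- invertibility
  have hker : ∀ x : Fin n → ℝ, A'.mulVec x = 0 → x = 0 := by
    intro x hx
    by_contra hx0
    have h1 := key x hx0
    rw [hx] at h1
    simp only [zero_dotProduct, dotProduct_zero] at h1
    have h3 := dp_self_nonneg (C.mulVec x)
    have h4 := dp_self_nonneg (Bᵀ.mulVec (X.mulVec x))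
    have h5 : (0:ℝ) < (g^2)⁻¹ := by positivity
    nlinarith
  have hdet : A'.det ≠ 0 := by
    intro hd
    obtain ⟨v, hv0, hv⟩ := (Matrix.exists_mulVec_eq_zero_iff).mpr hd
    exact hv0 (hker v hv)
  have hunit : IsUnit A' := (Matrix.isUnit_iff_isUnit_det _).mpr (Ne.isUnit hdet)
  refine ⟨hunit, ?_⟩
  -- norm bound
  set N : Matrix (Fin n) (Fin n) ℝ := (-A')⁻¹ with hNdef
  have hunitN : IsUnit (-A') := hunit.neg
  have hNA : (-A') * N = 1 := Matrix.mul_nonsing_inv _ ((Matrix.isUnit_iff_isUnit_det _).mp hunitN)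
  have hAN : A' * N = -1 := by
    rw [Matrix.neg_mul, neg_eq_iff_eq_neg] at hNA
    exact hNA
  set G : Matrix (Fin p) (Fin m) ℝ := C * N * B with hGdef
  -- pointwise strict bound in dot-product form
  have ptw : ∀ u : Fin m → ℝ, u ≠ 0 →
      G.mulVec u ⬝ᵥ G.mulVec u < g ^ 2 * (u ⬝ᵥ u) := by
    intro u hu
    set x : Fin n → ℝ := N.mulVec (B.mulVec u) with hxdef
    have hGu : G.mulVec u = C.mulVec x := by
      rw [hGdef, hxdef, ← Matrix.mulVec_mulVec, ← Matrix.mulVec_mulVec]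
    have hAx : A'.mulVec x = -(B.mulVec u) := by
      rw [hxdef, Matrix.mulVec_mulVec, hAN, Matrix.neg_mulVec, Matrix.one_mulVec]
    by_cases hx : x = 0
    · rw [hGu, hx]
      simp only [Matrix.mulVec_zero, dotProduct_zero]
      exact mul_pos (by positivity) (dp_self_pos hu)
    · have h1 := key x hx
      set w : Fin m → ℝ := Bᵀ.mulVec (X.mulVec x) with hwdef
      have e1 : A'.mulVec x ⬝ᵥ X.mulVec x = -(w ⬝ᵥ u) := by
        rw [hAx, neg_dotProduct, dotProduct_comm, dp_transpose]
      have e2 : X.mulVec x ⬝ᵥ A'.mulVec x = -(w ⬝ᵥ u) := by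
        rw [hAx, dotProduct_neg, dp_transpose]
      rw [e1, e2] at h1
      -- completing the square
      have hsq : 0 ≤ (g • u - g⁻¹ • w) ⬝ᵥ (g • u - g⁻¹ • w) := dp_self_nonneg _
      have hexp : (g • u - g⁻¹ • w) ⬝ᵥ (g • u - g⁻¹ • w)
          = g ^ 2 * (u ⬝ᵥ u) - 2 * (w ⬝ᵥ u) + (g ^ 2)⁻¹ * (w ⬝ᵥ w) := by
        simp only [sub_dotProduct, dotProduct_sub, smul_dotProduct,
          dotProduct_smul, smul_eq_mul]
        rw [dotProduct_comm u w]
        field_simp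
        ring
      rw [hGu]
      linarith [hexp ▸ hsq]
  -- transfer to the operator norm
  rw [Matrix.l2_opNorm_def]
  set f := (Matrix.toEuclideanLin.trans LinearMap.toContinuousLinearMap) G with hfdef
  have key2 : ∀ v : EuclideanSpace ℝ (Fin m), v ≠ 0 → ‖f v‖ < g * ‖v‖ := by
    intro v hv
    have huv : WithLp.equiv 2 (Fin m → ℝ) v ≠ 0 := by simpa using hv
    have h1 := ptw _ huv
    have h2 : ‖f v‖ ^ 2 < (g * ‖v‖) ^ 2 := by
      rw [hfdef, norm_app_sq_eq_dp, mul_pow, norm_sq_eq_dp]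
      exact h1
    exact lt_of_pow_lt_pow_left₀ 2 (by positivity) h2
  rcases Nat.eq_zero_or_pos m with hm | hm
  · subst hm
    have : G = 0 := Subsingleton.elim _ _
    rw [hfdef, this]
    simpa using hg
  · -- maximize over the unit sphere
    set v1 : EuclideanSpace ℝ (Fin m) := EuclideanSpace.single (⟨0, hm⟩ : Fin m) (1:ℝ) with hv1
    have hv1mem : v1 ∈ Metric.sphere (0 : EuclideanSpace ℝ (Fin m)) 1 := by
      rw [mem_sphere_zero_iff_norm, hv1, EuclideanSpace.norm_single]; norm_num
    obtain ⟨v0, hv0mem, hmax'⟩ := (isCompact_sphere (0 : EuclideanSpace ℝ (Fin m)) 1).exists_isMaxOn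
      ⟨v1, hv1mem⟩ (f.continuous.norm.continuousOn)
    have hmax : ∀ y ∈ Metric.sphere (0 : EuclideanSpace ℝ (Fin m)) 1, ‖f y‖ ≤ ‖f v0‖ :=
      fun y hy => hmax' hy
    have hv0norm : ‖v0‖ = 1 := mem_sphere_zero_iff_norm.mp hv0mem
    have hv0ne : v0 ≠ 0 := by intro h0; rw [h0, norm_zero] at hv0norm; norm_num at hv0norm
    have hM : ‖f v0‖ < g := by have := key2 v0 hv0ne; rwa [hv0norm, mul_one] at this
    have hle : ‖f‖ ≤ ‖f v0‖ := by
      apply f.opNorm_le_bound (norm_nonneg _)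
      intro v
      by_cases hv : v = 0
      · simp [hv]
      · have hvn : ‖v‖ ≠ 0 := norm_ne_zero_iff.mpr hv
        have hw : ‖(‖v‖⁻¹ • v)‖ = 1 := norm_smul_inv_norm hv
        have h2 := hmax (‖v‖⁻¹ • v) (mem_sphere_zero_iff_norm.mpr hw)
        have h3 : f v = ‖v‖ • f (‖v‖⁻¹ • v) := by
          rw [f.map_smul, smul_smul, mul_inv_cancel₀ hvn, one_smul]
        calc ‖f v‖ = ‖v‖ * ‖f (‖v‖⁻¹ • v)‖ := by
              rw [h3, norm_smul, Real.norm_eq_abs, abs_of_nonneg (norm_nonneg v)]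
          _ ≤ ‖f v0‖ * ‖v‖ := by
              rw [mul_comm]
              exact mul_le_mul_of_nonneg_right h2 (norm_nonneg v)
    exact lt_of_le_of_lt hle hM
end
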